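/- Let F(x) = Σ_{n≥1} f(n)x^n be a formal power series over ℚ with integer coefficients and f(1) = 1. Then the unique formal power series A(x) over ℚ with zero constant term and linear coefficient 1 satisfying A(A(x)) = F(4x)/4 has integer coefficients. -/

import Mathlib

open PowerSeries Finset

/-- Composition `G(A(x))` of formal power series, valid when `A` has zero
constant term. -/
noncomputable def PSComp (G A : PowerSeries ℚ) : PowerSeries ℚ :=
  PowerSeries.mk fun n => ∑ m ∈ range (n + 1), coeff m G * coeff n (A ^ m)

private def isInt (q : ℚ) : Prop := ∃ z : ℤ, q = z
private def isEven (q : ℚ) : Prop := ∃ z : ℤ, q = 2 * z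
private def isFour (q : ℚ) : Prop := ∃ z : ℤ, q = 4 * z

private lemma isEven.toInt {q : ℚ} (h : isEven q) : isInt q := by
  obtain ⟨z, hz⟩ := h; exact ⟨2 * z, by rw [hz]; push_cast; ring⟩

private lemma isEven_zero : isEven 0 := ⟨0, by norm_num⟩
private lemma isFour_zero : isFour 0 := ⟨0, by norm_num⟩

private lemma isEven_add {a b : ℚ} (ha : isEven a) (hb : isEven b) : isEven (a + b) := by
  obtain ⟨x, hx⟩ := ha; obtain ⟨y, hy⟩ := hb
  exact ⟨x + y, by rw [hx, hy]; push_cast; ring⟩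

private lemma isFour_add {a b : ℚ} (ha : isFour a) (hb : isFour b) : isFour (a + b) := by
  obtain ⟨x, hx⟩ := ha; obtain ⟨y, hy⟩ := hb
  exact ⟨x + y, by rw [hx, hy]; push_cast; ring⟩

private lemma isEven_mul_int {a b : ℚ} (ha : isEven a) (hb : isInt b) : isEven (a * b) := by
  obtain ⟨x, hx⟩ := ha; obtain ⟨y, hy⟩ := hb
  exact ⟨x * y, by rw [hx, hy]; push_cast; ring⟩

private lemma isEven_mul_even {a b : ℚ} (ha : isEven a) (hb : isEven b) : isFour (a * b) := by
  obtain ⟨x, hx⟩ := ha; obtain ⟨y, hy⟩ := hb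
  exact ⟨x * y, by rw [hx, hy]; push_cast; ring⟩

private lemma isEven_sum {ι : Type*} (s : Finset ι) (f : ι → ℚ)
    (h : ∀ i ∈ s, isEven (f i)) : isEven (∑ i ∈ s, f i) :=
  Finset.sum_induction f isEven (fun _ _ => isEven_add) isEven_zero h

private lemma isFour_sum {ι : Type*} (s : Finset ι) (f : ι → ℚ)
    (h : ∀ i ∈ s, isFour (f i)) : isFour (∑ i ∈ s, f i) :=
  Finset.sum_induction f isFour (fun _ _ => isFour_add) isFour_zero h

private lemma coeff_pow_lt (A : PowerSeries ℚ) (hA0 : constantCoeff A = 0) :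
    ∀ m j, j < m → coeff j (A ^ m) = 0 := by
  intro m
  induction m with
  | zero => intro j h; exact absurd h (Nat.not_lt_zero j)
  | succ m ih =>
    intro j hj
    rw [pow_succ', coeff_mul]
    refine Finset.sum_eq_zero fun p hp => ?_
    rw [Finset.HasAntidiagonal.mem_antidiagonal] at hp
    rcases Nat.eq_zero_or_pos p.1 with h1 | h1
    · rw [h1, coeff_zero_eq_constantCoeff, hA0, zero_mul]
    · rw [ih p.2 (by omega), mul_zero]

private lemma coeff_pow_self (A : PowerSeries ℚ) (hA0 : constantCoeff A = 0)
    (hA1 : coeff 1 A = 1) : ∀ m, coeff m (A ^ m) = 1 := by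
  intro m
  induction m with
  | zero => simp
  | succ m ih =>
    rw [pow_succ', coeff_mul]
    rw [Finset.sum_eq_single (1, m)]
    · rw [hA1, ih, one_mul]
    · intro p hp hne
      rw [Finset.HasAntidiagonal.mem_antidiagonal] at hp
      obtain h0 | h1 | h2 : p.1 = 0 ∨ p.1 = 1 ∨ 2 ≤ p.1 := by omega
      · rw [h0, coeff_zero_eq_constantCoeff, hA0, zero_mul]
      · exact absurd (Prod.ext h1 (by omega)) hne
      · rw [coeff_pow_lt A hA0 m p.2 (by omega), mul_zero]
    · intro h
      exact absurd (Finset.HasAntidiagonal.mem_antidiagonal.2 (by omega)) h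

private lemma key (A : PowerSeries ℚ) (hA0 : constantCoeff A = 0)
    (hA1 : coeff 1 A = 1) (N : ℕ)
    (hInt : ∀ k, k ≤ N → isInt (coeff k A))
    (hEv : ∀ k, 2 ≤ k → k ≤ N → isEven (coeff k A)) :
    ∀ m, 1 ≤ m → ∀ j, 1 ≤ j → j ≤ N →
      ∃ z : ℤ, coeff j (A ^ m) = (if j = m then 1 else 0) + 2 * z := by
  intro m hm
  induction m, hm using Nat.le_induction with
  | base =>
    intro j hj1 hjN
    rcases eq_or_lt_of_le hj1 with h1 | h1
    · exact ⟨0, by rw [pow_one, ← h1, hA1]; norm_num⟩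
    · obtain ⟨z, hz⟩ := hEv j (by omega) hjN
      exact ⟨z, by rw [pow_one, hz, if_neg (by omega)]; ring⟩
  | succ m hm ih =>
    intro j hj1 hjN
    rw [pow_succ', coeff_mul]
    rcases eq_or_lt_of_le hj1 with h1 | h1
    · -- j = 1
      refine ⟨0, ?_⟩
      have hsum : ∑ p ∈ Finset.HasAntidiagonal.antidiagonal j, coeff p.1 A * coeff p.2 (A ^ m) = 0 := by
        refine Finset.sum_eq_zero fun p hp => ?_
        rw [Finset.HasAntidiagonal.mem_antidiagonal] at hp
        rcases Nat.eq_zero_or_pos p.1 with h0 | h0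
        · rw [h0, coeff_zero_eq_constantCoeff, hA0, zero_mul]
        · rw [coeff_pow_lt A hA0 m p.2 (by omega), mul_zero]
      rw [hsum, if_neg (by omega)]; ring
    · -- j ≥ 2
      have hmem : ((1 : ℕ), j - 1) ∈ Finset.HasAntidiagonal.antidiagonal j := by
        rw [Finset.HasAntidiagonal.mem_antidiagonal]; omega
      rw [← Finset.sum_erase_add _ _ hmem]
      obtain ⟨z1, hz1⟩ := ih (j - 1) (by omega) (by omega)
      have herase : isEven (∑ p ∈ (Finset.HasAntidiagonal.antidiagonal j).erase (1, j - 1),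
          coeff p.1 A * coeff p.2 (A ^ m)) := by
        refine isEven_sum _ _ fun p hp => ?_
        have hpne := Finset.ne_of_mem_erase hp
        have hpad := Finset.HasAntidiagonal.mem_antidiagonal.1 (Finset.mem_of_mem_erase hp)
        obtain h0 | h1' | h2 : p.1 = 0 ∨ p.1 = 1 ∨ 2 ≤ p.1 := by omega
        · rw [h0, coeff_zero_eq_constantCoeff, hA0, zero_mul]; exact isEven_zero
        · exact absurd (Prod.ext h1' (by omega)) hpne
        · refine isEven_mul_int (hEv p.1 h2 (by omega)) ?_
          rcases Nat.eq_zero_or_pos p.2 with hz | hz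
          · rw [hz, coeff_pow_lt A hA0 m 0 (by omega)]; exact ⟨0, by norm_num⟩
          · obtain ⟨w, hw⟩ := ih p.2 hz (by omega)
            refine ⟨(if p.2 = m then 1 else 0) + 2 * w, by rw [hw]; push_cast; split <;> norm_num⟩
      obtain ⟨w, hw⟩ := herase
      refine ⟨w + z1, ?_⟩
      rw [hw, hA1, hz1, one_mul]
      have hδ : (if j - 1 = m then (1 : ℚ) else 0) = (if j = m + 1 then 1 else 0) := by
        split_ifs with h h' h' <;> first | rfl | omega
      rw [hδ]; push_cast; ring

private lemma key2 (A : PowerSeries ℚ) (hA0 : constantCoeff A = 0)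
    (hA1 : coeff 1 A = 1) (N : ℕ)
    (hInt : ∀ k, k ≤ N → isInt (coeff k A))
    (hEv : ∀ k, 2 ≤ k → k ≤ N → isEven (coeff k A)) :
    ∀ m, 2 ≤ m → m ≤ N → isEven (coeff (N + 1) (A ^ m)) := by
  intro m hm2 hmN
  obtain ⟨m, rfl⟩ : ∃ m', m = m' + 1 := ⟨m - 1, by omega⟩
  rw [pow_succ', coeff_mul]
  refine isEven_sum _ _ fun p hp => ?_
  have hpad := Finset.HasAntidiagonal.mem_antidiagonal.1 hp
  obtain h0 | h1 | h2 : p.1 = 0 ∨ p.1 = 1 ∨ 2 ≤ p.1 := by omega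
  · rw [h0, coeff_zero_eq_constantCoeff, hA0, zero_mul]; exact isEven_zero
  · have hp2 : p.2 = N := by omega
    obtain ⟨z, hz⟩ := key A hA0 hA1 N hInt hEv m (by omega) N (by omega) (le_refl N)
    rw [h1, hp2, hA1, one_mul, hz, if_neg (by omega)]
    exact ⟨z, by ring⟩
  · rcases Nat.eq_zero_or_pos p.2 with hz | hz
    · rw [hz, coeff_pow_lt A hA0 m 0 (by omega), mul_zero]; exact isEven_zero
    · refine isEven_mul_int (hEv p.1 h2 (by omega)) ?_
      obtain ⟨w, hw⟩ := key A hA0 hA1 N hInt hEv m (by omega) p.2 hz (by omega)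
      exact ⟨(if p.2 = m then 1 else 0) + 2 * w, by rw [hw]; push_cast; split <;> norm_num⟩

theorem stmt_12 (F : PowerSeries ℚ) (hF0 : constantCoeff F = 0)
    (hFint : ∀ n, ∃ m : ℤ, coeff n F = m) (hF1 : coeff 1 F = 1)
    (G : PowerSeries ℚ) (hG0 : constantCoeff G = 0)
    (hG : ∀ n, 1 ≤ n → coeff n G = 4 ^ (n - 1) * coeff n F)
    (A : PowerSeries ℚ) (hA0 : constantCoeff A = 0) (hA1 : coeff 1 A = 1)
    (hAG : PSComp A A = G) :
    ∀ n, ∃ m : ℤ, coeff n A = m := by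
  have main : ∀ n, 2 ≤ n → isEven (coeff n A) := by
    intro n
    induction n using Nat.strong_induction_on with
    | _ n ih =>
      intro hn
      have hEv : ∀ k, 2 ≤ k → k ≤ n - 1 → isEven (coeff k A) :=
        fun k hk2 hkn => ih k (by omega) hk2
      have hInt : ∀ k, k ≤ n - 1 → isInt (coeff k A) := by
        intro k hk
        obtain h0 | h1 | h2 : k = 0 ∨ k = 1 ∨ 2 ≤ k := by omega
        · exact ⟨0, by rw [h0, coeff_zero_eq_constantCoeff, hA0]; norm_num⟩
        · exact ⟨1, by rw [h1, hA1]; norm_num⟩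
        · exact (hEv k h2 hk).toInt
      -- the coefficient equation at n
      have heq : ∑ m ∈ range (n + 1), coeff m A * coeff n (A ^ m) = coeff n G := by
        have := congrArg (coeff n) hAG
        rwa [PSComp, coeff_mk] at this
      -- split the sum
      have hsplit : ∑ m ∈ range (n + 1), coeff m A * coeff n (A ^ m) =
          coeff 0 A * coeff n (A ^ 0) + coeff 1 A * coeff n (A ^ 1) +
          ((∑ m ∈ Finset.Ico 2 n, coeff m A * coeff n (A ^ m)) +
            coeff n A * coeff n (A ^ n)) := by
        rw [range_eq_Ico, Finset.sum_eq_sum_Ico_succ_bot (by omega),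
          Finset.sum_eq_sum_Ico_succ_bot (by omega), Finset.sum_Ico_succ_top (by omega)]
        ring
      have hmid : isFour (∑ m ∈ Finset.Ico 2 n, coeff m A * coeff n (A ^ m)) := by
        refine isFour_sum _ _ fun m hm => ?_
        rw [Finset.mem_Ico] at hm
        have hN : n - 1 + 1 = n := by omega
        have hk2 := key2 A hA0 hA1 (n - 1) hInt hEv m hm.1 (by omega)
        rw [hN] at hk2
        exact isEven_mul_even (hEv m hm.1 (by omega)) hk2
      obtain ⟨T, hT⟩ := hmid
      obtain ⟨fn, hfn⟩ := hFint n
      have hGn : coeff n G = 4 * ((4 : ℚ) ^ (n - 2) * fn) := by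
        rw [hG n (by omega), hfn]
        have : n - 1 = (n - 2) + 1 := by omega
        rw [this, pow_succ]; ring
      rw [hsplit, coeff_zero_eq_constantCoeff, hA0, zero_mul, pow_one, hA1, one_mul,
        coeff_pow_self A hA0 hA1 n, mul_one, hT, hGn] at heq
      obtain ⟨s, hs⟩ := hFint n
      refine ⟨4 ^ (n - 2) * fn - T, ?_⟩
      push_cast
      linarith
  intro n
  obtain h0 | h1 | h2 : n = 0 ∨ n = 1 ∨ 2 ≤ n := by omega
  · exact ⟨0, by rw [h0, coeff_zero_eq_constantCoeff, hA0]; norm_num⟩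
  · exact ⟨1, by rw [h1, hA1]; norm_num⟩
  · obtain ⟨z, hz⟩ := main n h2
    exact ⟨2 * z, by rw [hz]; push_cast; ring⟩
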